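/- For every r ≥ 1 and n ∈ ℕ, the q-Frobenius–Euler polynomial expands in the order-r basis as H^{(1)}_{n,q}(x|λ) = (1/(1 − λ)^r) · ∑_{k=0}^{n} A_k · H^{(r)}_{k,q}(x|λ), where A_k = ∑_{m=0}^{n−k} ∑_{l=0}^{r} ∑_{(i_1,…,i_l) ∈ ℕ^l, i_1+⋯+i_l = m} binom(r,l) · (−λ)^{r−l} · C(m; i_1,…,i_l)_q · C(m+k,m)_q · C(n,m+k)_q · H_{n−m−k,q}(λ); here binom(r,l) is the ordinary binomial coefficient, C(m; i_1,…,i_l)_q = [m]_q!/([i_1]_q! ⋯ [i_l]_q!) is the q-multinomial coefficient (with the sum over the empty tuple for l = 0 equal to δ_{m,0}), and H_{n−m−k,q}(λ) = H^{(1)}_{n−m−k,q}(λ) are the q-Frobenius–Euler numbers. -/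

import Mathlib

open Finset Polynomial

/-- The `q`-integer `[n]_q = (1 - q^n)/(1 - q)` viewed in `ℂ`. -/
noncomputable def qInt (q : ℝ) (n : ℕ) : ℂ := (1 - (q : ℂ) ^ n) / (1 - (q : ℂ))

/-- The `q`-factorial `[n]_q! = ∏_{j=1}^n [j]_q`. -/
noncomputable def qFact (q : ℝ) (n : ℕ) : ℂ := ∏ j ∈ Finset.range n, qInt q (j + 1)

/-- The `q`-binomial coefficient `[n]_q!/([k]_q! [n-k]_q!)`. -/
noncomputable def qBinom (q : ℝ) (n k : ℕ) : ℂ := qFact q n / (qFact q k * qFact q (n - k))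

/-- The formal `q`-exponential `e_q(t) = ∑ t^n/[n]_q!` in `ℂ[x][[t]]`. -/
noncomputable def qExp (q : ℝ) : PowerSeries (Polynomial ℂ) :=
  PowerSeries.mk fun n => Polynomial.C (1 / qFact q n)

/-- The formal series `e_q(xt) = ∑ x^n t^n/[n]_q!` in `ℂ[x][[t]]`. -/
noncomputable def qExpX (q : ℝ) : PowerSeries (Polynomial ℂ) :=
  PowerSeries.mk fun n => Polynomial.C (1 / qFact q n) * Polynomial.X ^ n

/-- `H : ℕ → ℂ[x]` is the family of order-`r` `q`-Frobenius-Euler polynomials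
`H^{(r)}_{n,q}(x|λ)`:
`(∑ H_n t^n/[n]_q!) ⬝ (e_q(t) - λ)^r = (1 - λ)^r e_q(xt)` in `ℂ[x][[t]]`. -/
def IsqFrobeniusEulerOrder (q : ℝ) (lam : ℂ) (r : ℕ) (H : ℕ → Polynomial ℂ) : Prop :=
  (PowerSeries.mk fun n => Polynomial.C (1 / qFact q n) * H n) *
      (qExp q - PowerSeries.C (Polynomial.C lam)) ^ r =
    PowerSeries.C (Polynomial.C ((1 - lam) ^ r)) * qExpX q

lemma qFact_ne_zero {q : ℝ} (hq0 : 0 < q) (hq1 : q < 1) (n : ℕ) : qFact q n ≠ 0 := by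
  refine Finset.prod_ne_zero_iff.mpr fun j _ => ?_
  have h1 : q ^ (j + 1) < 1 := pow_lt_one₀ hq0.le hq1 (Nat.succ_ne_zero j)
  have h2 : ((q : ℂ)) ^ (j + 1) ≠ 1 := by exact_mod_cast h1.ne
  have h3 : (q : ℂ) ≠ 1 := by exact_mod_cast hq1.ne
  exact div_ne_zero (sub_ne_zero.mpr fun h => h2 h.symm)
    (sub_ne_zero.mpr fun h => h3 h.symm)

lemma sum_antidiagonalTuple_succ {M : Type*} [AddCommMonoid M] (l m : ℕ)
    (F : (Fin (l + 1) → ℕ) → M) :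
    ∑ i ∈ Finset.Nat.antidiagonalTuple (l + 1) m, F i =
      ∑ a ∈ Finset.range (m + 1), ∑ i ∈ Finset.Nat.antidiagonalTuple l (m - a),
        F (Fin.cons a i) := by
  rw [Finset.sum_sigma']
  refine Finset.sum_nbij' (fun (i : Fin (l+1) → ℕ) => (⟨i 0, Fin.tail i⟩ : Σ _ : ℕ, (Fin l → ℕ)))
    (fun (x : Σ _ : ℕ, (Fin l → ℕ)) => Fin.cons x.1 x.2) ?_ ?_ ?_ ?_ ?_
  · intro i hi
    rw [Finset.Nat.mem_antidiagonalTuple] at hi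
    have hs : i 0 + ∑ j, Fin.tail i j = m := by
      rw [← hi, Fin.sum_univ_succ]; rfl
    simp only [Finset.mem_sigma, Finset.mem_range, Finset.Nat.mem_antidiagonalTuple]
    exact ⟨by omega, by omega⟩
  · intro x hx
    simp only [Finset.mem_sigma, Finset.mem_range,
      Finset.Nat.mem_antidiagonalTuple] at hx
    rw [Finset.Nat.mem_antidiagonalTuple, Fin.sum_cons, hx.2]
    omega
  · intro i _
    exact Fin.cons_self_tail i
  · intro x _
    simp [Fin.tail_cons]
  · intro i _
    rw [Fin.cons_self_tail i]

lemma coeff_qExp_pow (q : ℝ) (l m : ℕ) :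
    PowerSeries.coeff m ((qExp q) ^ l) =
      ∑ i ∈ Finset.Nat.antidiagonalTuple l m, ∏ j, Polynomial.C (1 / qFact q (i j)) := by
  induction l generalizing m with
  | zero =>
    cases m with
    | zero => simp [Finset.Nat.antidiagonalTuple_zero_zero]
    | succ m => simp [Finset.Nat.antidiagonalTuple_zero_succ, PowerSeries.coeff_one]
  | succ l ih =>
    rw [pow_succ', PowerSeries.coeff_mul, Finset.Nat.sum_antidiagonal_eq_sum_range_succ_mk,
      sum_antidiagonalTuple_succ]
    refine Finset.sum_congr rfl fun a _ => ?_
    rw [ih, Finset.mul_sum]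
    refine Finset.sum_congr rfl fun i _ => ?_
    rw [Fin.prod_univ_succ]
    simp [qExp, PowerSeries.coeff_mk]


set_option maxHeartbeats 2000000 in
/-- For `r ≥ 1`,
`H^{(1)}_{n,q}(x|λ) = (1/(1-λ)^r) ∑_{k=0}^n A_k H^{(r)}_{k,q}(x|λ)` with
`A_k = ∑_{m=0}^{n-k} ∑_{l=0}^r ∑_{i₁+⋯+i_l=m} binom(r,l) (-λ)^{r-l}
  C(m;i₁,…,i_l)_q C(m+k,m)_q C(n,m+k)_q H_{n-m-k,q}(λ)`. -/
theorem qFrobeniusEuler_expansion_in_order_r_basis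
    (q : ℝ) (hq0 : 0 < q) (hq1 : q < 1) (lam : ℂ) (hlam : lam ≠ 1)
    (r : ℕ) (hr : 1 ≤ r)
    (H1 : ℕ → Polynomial ℂ) (hH1 : IsqFrobeniusEulerOrder q lam 1 H1)
    (Hr : ℕ → Polynomial ℂ) (hHr : IsqFrobeniusEulerOrder q lam r Hr) (n : ℕ) :
    H1 n = Polynomial.C (1 / (1 - lam) ^ r) *
      ∑ k ∈ Finset.range (n + 1),
        Polynomial.C (∑ m ∈ Finset.range (n - k + 1), ∑ l ∈ Finset.range (r + 1),
          ∑ i ∈ Finset.Nat.antidiagonalTuple l m,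
            (r.choose l : ℂ) * (-lam) ^ (r - l) *
              (qFact q m / ∏ j, qFact q (i j)) *
              qBinom q (m + k) m * qBinom q n (m + k) *
              (H1 (n - m - k)).eval 0) * Hr k := by
  classical
  have hF := qFact_ne_zero hq0 hq1
  have hlam' : (1 : ℂ) - lam ≠ 0 := sub_ne_zero.mpr (Ne.symm hlam)
  have hlamr : ((1 : ℂ) - lam) ^ r ≠ 0 := pow_ne_zero r hlam'
  have hq0fact : qFact q 0 = 1 := by simp [qFact]
  have h1 := hH1
  have h2 := hHr
  unfold IsqFrobeniusEulerOrder at h1 h2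
  rw [pow_one, pow_one] at h1
  set ψ : Polynomial ℂ →+* Polynomial ℂ := (Polynomial.C).comp (Polynomial.evalRingHom (0:ℂ))
    with hψ
  have hψapp : ∀ p : Polynomial ℂ, ψ p = Polynomial.C (p.eval 0) := by
    intro p; simp [hψ, Polynomial.coe_evalRingHom]
  -- N
  have hmapS1 : PowerSeries.map ψ (PowerSeries.mk fun n => Polynomial.C (1 / qFact q n) * H1 n)
      = PowerSeries.mk fun j => Polynomial.C (1 / qFact q j * (H1 j).eval 0) := by
    ext j
    simp [PowerSeries.coeff_map, PowerSeries.coeff_mk, hψapp]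
  have hmapE : PowerSeries.map ψ (qExp q - PowerSeries.C (Polynomial.C lam))
      = qExp q - PowerSeries.C (Polynomial.C lam) := by
    rw [map_sub, PowerSeries.map_C]
    congr 1
    · ext j; simp [qExp, PowerSeries.coeff_map, PowerSeries.coeff_mk, hψapp]
    · rw [hψapp]; simp
  have hmapX : PowerSeries.map ψ (qExpX q) = 1 := by
    ext j
    cases j with
    | zero => simp [qExpX, PowerSeries.coeff_map, PowerSeries.coeff_mk, hψapp, hq0fact]
    | succ j =>
      simp [qExpX, PowerSeries.coeff_map, PowerSeries.coeff_mk, hψapp,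
        PowerSeries.coeff_one]
  have hEN : (qExp q - PowerSeries.C (Polynomial.C lam)) *
      (PowerSeries.mk fun j => Polynomial.C (1 / qFact q j * (H1 j).eval 0)) =
      PowerSeries.C (Polynomial.C (1 - lam)) := by
    have h3 := congrArg (PowerSeries.map ψ) h1
    rw [map_mul, map_mul, hmapS1, hmapE, hmapX, PowerSeries.map_C, mul_one, hψapp] at h3
    rw [mul_comm, h3]
    simp
  have hCne : (PowerSeries.C (Polynomial.C (1 - lam))) ≠ 0 := by
    intro h
    have h4 := congrArg (PowerSeries.constantCoeff) h
    simp only [PowerSeries.constantCoeff_C, map_zero, Polynomial.C_eq_zero] at h4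
    exact hlam' h4
  -- S1 = qExpX * N
  have hS1 : (PowerSeries.mk fun n => Polynomial.C (1 / qFact q n) * H1 n) =
      qExpX q * (PowerSeries.mk fun j => Polynomial.C (1 / qFact q j * (H1 j).eval 0)) := by
    apply mul_right_cancel₀ hCne
    calc (PowerSeries.mk fun n => Polynomial.C (1 / qFact q n) * H1 n) *
        PowerSeries.C (Polynomial.C (1 - lam))
        = ((PowerSeries.mk fun n => Polynomial.C (1 / qFact q n) * H1 n) *
            (qExp q - PowerSeries.C (Polynomial.C lam))) *
          (PowerSeries.mk fun j => Polynomial.C (1 / qFact q j * (H1 j).eval 0)) := by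
          rw [← hEN]; ring
      _ = (PowerSeries.C (Polynomial.C (1 - lam)) * qExpX q) *
          (PowerSeries.mk fun j => Polynomial.C (1 / qFact q j * (H1 j).eval 0)) := by
          rw [h1]
      _ = qExpX q * (PowerSeries.mk fun j => Polynomial.C (1 / qFact q j * (H1 j).eval 0)) *
          PowerSeries.C (Polynomial.C (1 - lam)) := by ring
  -- key identity
  have hkey : PowerSeries.C (Polynomial.C ((1 - lam) ^ r)) *
      (PowerSeries.mk fun n => Polynomial.C (1 / qFact q n) * H1 n) =
      (PowerSeries.mk fun n => Polynomial.C (1 / qFact q n) * Hr n) *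
        (((qExp q - PowerSeries.C (Polynomial.C lam)) ^ r) *
          (PowerSeries.mk fun j => Polynomial.C (1 / qFact q j * (H1 j).eval 0))) := by
    rw [hS1, ← mul_assoc, ← h2]
    ring
  -- coefficient of E^r
  have hEr : ∀ m : ℕ,
      PowerSeries.coeff m
          ((qExp q - PowerSeries.C (Polynomial.C lam)) ^ r) =
      Polynomial.C (∑ l ∈ Finset.range (r + 1), ∑ i ∈ Finset.Nat.antidiagonalTuple l m,
        (r.choose l : ℂ) * (-lam) ^ (r - l) * ∏ j, (1 / qFact q (i j))) := by
    intro m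
    have hsplit : qExp q - PowerSeries.C (Polynomial.C lam) =
        qExp q + PowerSeries.C (Polynomial.C (-lam)) := by
      rw [map_neg, map_neg]; ring
    rw [hsplit, add_pow, map_sum, map_sum]
    refine Finset.sum_congr rfl fun l _ => ?_
    have hcast : ((r.choose l : ℕ) : PowerSeries (Polynomial ℂ)) =
        PowerSeries.C (Polynomial.C ((r.choose l : ℕ) : ℂ)) := by
      simp
    rw [← map_pow, ← map_pow, hcast, PowerSeries.coeff_mul_C, PowerSeries.coeff_mul_C,
      coeff_qExp_pow, map_sum, Finset.sum_mul, Finset.sum_mul]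
    refine Finset.sum_congr rfl fun i _ => ?_
    rw [map_mul, map_mul, map_prod]
    ring
  have hErN : ∀ c : ℕ,
      PowerSeries.coeff c
        (((qExp q - PowerSeries.C (Polynomial.C lam)) ^ r) *
          (PowerSeries.mk fun j => Polynomial.C (1 / qFact q j * (H1 j).eval 0))) =
      Polynomial.C (∑ m ∈ Finset.range (c + 1),
        (∑ l ∈ Finset.range (r + 1), ∑ i ∈ Finset.Nat.antidiagonalTuple l m,
          (r.choose l : ℂ) * (-lam) ^ (r - l) * ∏ j, (1 / qFact q (i j))) *
        (1 / qFact q (c - m) * (H1 (c - m)).eval 0)) := by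
    intro c
    rw [PowerSeries.coeff_mul, Finset.Nat.sum_antidiagonal_eq_sum_range_succ_mk, map_sum]
    refine Finset.sum_congr rfl fun m _ => ?_
    simp only [hEr, PowerSeries.coeff_mk, ← map_mul]
  -- extract coefficient n from hkey
  have hco := congrArg (PowerSeries.coeff n) hkey
  rw [PowerSeries.coeff_C_mul, PowerSeries.coeff_mk, PowerSeries.coeff_mul,
    Finset.Nat.sum_antidiagonal_eq_sum_range_succ_mk] at hco
  simp only [PowerSeries.coeff_mk, hErN] at hco
  -- solve for H1 n
  have hsolve : H1 n = Polynomial.C (qFact q n / (1 - lam) ^ r) *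
      ∑ k ∈ Finset.range (n + 1),
        Polynomial.C (1 / qFact q k) * Hr k *
          Polynomial.C (∑ m ∈ Finset.range (n - k + 1),
            (∑ l ∈ Finset.range (r + 1), ∑ i ∈ Finset.Nat.antidiagonalTuple l m,
              (r.choose l : ℂ) * (-lam) ^ (r - l) * ∏ j, (1 / qFact q (i j))) *
            (1 / qFact q (n - k - m) * (H1 (n - k - m)).eval 0)) := by
    rw [← hco, ← mul_assoc, ← mul_assoc, ← map_mul, ← map_mul,
      show qFact q n / (1 - lam) ^ r * ((1 - lam) ^ r) * (1 / qFact q n) = 1 from by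
        field_simp [hF n, hlamr]]
    simp
  rw [hsolve, Finset.mul_sum, Finset.mul_sum]
  refine Finset.sum_congr rfl fun k hk => ?_
  have hk' : k ≤ n := Nat.lt_succ_iff.mp (Finset.mem_range.mp hk)
  have hscalar : qFact q n / (1 - lam) ^ r * (1 / qFact q k *
      ∑ m ∈ Finset.range (n - k + 1),
        (∑ l ∈ Finset.range (r + 1), ∑ i ∈ Finset.Nat.antidiagonalTuple l m,
          (r.choose l : ℂ) * (-lam) ^ (r - l) * ∏ j, (1 / qFact q (i j))) *
        (1 / qFact q (n - k - m) * (H1 (n - k - m)).eval 0)) =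
      1 / (1 - lam) ^ r * ∑ m ∈ Finset.range (n - k + 1), ∑ l ∈ Finset.range (r + 1),
        ∑ i ∈ Finset.Nat.antidiagonalTuple l m,
          (r.choose l : ℂ) * (-lam) ^ (r - l) *
            (qFact q m / ∏ j, qFact q (i j)) *
            qBinom q (m + k) m * qBinom q n (m + k) *
            (H1 (n - m - k)).eval 0 := by
    simp only [Finset.mul_sum, Finset.sum_mul]
    refine Finset.sum_congr rfl fun m hm => ?_
    refine Finset.sum_congr rfl fun l _ => ?_
    refine Finset.sum_congr rfl fun i _ => ?_
    have hm' : m ≤ n - k := Nat.lt_succ_iff.mp (Finset.mem_range.mp hm)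
    have e1 : m + k - m = k := by omega
    have e2 : n - (m + k) = n - k - m := by omega
    have e3 : n - m - k = n - k - m := by omega
    have hP : (∏ j, qFact q (i j)) ≠ 0 := Finset.prod_ne_zero_iff.mpr fun j _ => hF _
    have hprod : (∏ j, (1 / qFact q (i j))) = 1 / ∏ j, qFact q (i j) := by
      simp [one_div]
    have key : qFact q m / (∏ j, qFact q (i j)) *
        (qFact q (m + k) / (qFact q m * qFact q k)) *
        (qFact q n / (qFact q (m + k) * qFact q (n - k - m))) =
        qFact q n / (qFact q k * (∏ j, qFact q (i j)) * qFact q (n - k - m)) := by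
      field_simp [hF k, hF m, hF (m + k), hF (n - k - m), hP]
    simp only [qBinom, e1, e2, e3, hprod]
    linear_combination (-(↑(r.choose l) * (-lam) ^ (r - l) * (H1 (n - k - m)).eval 0 *
      (1 / (1 - lam) ^ r))) * key
  calc Polynomial.C (qFact q n / (1 - lam) ^ r) *
      (Polynomial.C (1 / qFact q k) * Hr k * Polynomial.C (∑ m ∈ Finset.range (n - k + 1),
        (∑ l ∈ Finset.range (r + 1), ∑ i ∈ Finset.Nat.antidiagonalTuple l m,
          (r.choose l : ℂ) * (-lam) ^ (r - l) * ∏ j, (1 / qFact q (i j))) *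
        (1 / qFact q (n - k - m) * (H1 (n - k - m)).eval 0)))
      = Polynomial.C (qFact q n / (1 - lam) ^ r * (1 / qFact q k *
          ∑ m ∈ Finset.range (n - k + 1),
            (∑ l ∈ Finset.range (r + 1), ∑ i ∈ Finset.Nat.antidiagonalTuple l m,
              (r.choose l : ℂ) * (-lam) ^ (r - l) * ∏ j, (1 / qFact q (i j))) *
            (1 / qFact q (n - k - m) * (H1 (n - k - m)).eval 0))) * Hr k := by
        rw [map_mul, map_mul]; ring
    _ = _ := by rw [hscalar, map_mul]; ring
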